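/- For a function f : ℝ → ℂ, the following three conditions are equivalent: (a) there is a constant C > 0 such that |f(s) − f(t)| ≤ C·|s − t|·(1 + |t|)⁻¹ for all s, t ∈ ℝ; (b) there is a constant C > 0 such that |f(s) − f(t)| ≤ C·|s − t|/(1 + |s| + |t|) for all s, t ∈ ℝ; (c) the function s ↦ (s + i)·f(s) (with values in ℂ) is Lipschitz on ℝ. -/

import Mathlib

open Complex

private lemma one_le_norm_addI (s : ℝ) : (1:ℝ) ≤ ‖(s:ℂ) + I‖ := by
  calc (1:ℝ) = |((s:ℂ) + I).im| := by simp
    _ ≤ ‖(s:ℂ) + I‖ := Complex.abs_im_le_norm _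
    _ = ‖(s:ℂ) + I‖ := rfl

private lemma abs_le_norm_addI (s : ℝ) : |s| ≤ ‖(s:ℂ) + I‖ := by
  calc |s| = |((s:ℂ) + I).re| := by simp
    _ ≤ ‖(s:ℂ) + I‖ := Complex.abs_re_le_norm _
    _ = ‖(s:ℂ) + I‖ := rfl

private lemma norm_addI_le (s : ℝ) : ‖(s:ℂ) + I‖ ≤ 1 + |s| := by
  calc ‖(s:ℂ) + I‖ ≤ ‖(s:ℂ)‖ + ‖I‖ := norm_add_le _ _
    _ = 1 + |s| := by simp [Complex.norm_real]; ring

/-- Theorem 2.4 (equivalence of conditions (a), (b), (c)): for a function `f : ℝ → ℂ`,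
the estimate `|f s − f t| ≤ C |s − t| (1 + |t|)⁻¹` is equivalent to the estimate
`|f s − f t| ≤ C |s − t| / (1 + |s| + |t|)`, and both are equivalent to the Lipschitzness
of the function `s ↦ (s + i) f s`. -/
theorem stmt0 (f : ℝ → ℂ) :
    ((∃ C : ℝ, 0 < C ∧ ∀ s t : ℝ, ‖f s - f t‖ ≤ C * |s - t| * (1 + |t|)⁻¹) ↔
      (∃ C : ℝ, 0 < C ∧ ∀ s t : ℝ, ‖f s - f t‖ ≤ C * |s - t| / (1 + |s| + |t|))) ∧
    ((∃ C : ℝ, 0 < C ∧ ∀ s t : ℝ, ‖f s - f t‖ ≤ C * |s - t| * (1 + |t|)⁻¹) ↔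
      (∃ L : ℝ, 0 ≤ L ∧ ∀ s t : ℝ,
        ‖((s : ℂ) + I) * f s - ((t : ℂ) + I) * f t‖ ≤ L * |s - t|)) := by
  constructor
  · constructor
    · rintro ⟨C, hC, h⟩
      refine ⟨2*C, by linarith, fun s t => ?_⟩
      have h1 : (0:ℝ) < 1 + |t| := by positivity
      have h2 : (0:ℝ) < 1 + |s| := by positivity
      have h3 : (0:ℝ) < 1 + |s| + |t| := by positivity
      have habs : (0:ℝ) ≤ |s - t| := abs_nonneg _
      rcases le_total |s| |t| with hst | hst
      · calc ‖f s - f t‖ ≤ C * |s - t| * (1 + |t|)⁻¹ := h s t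
          _ ≤ 2*C * |s - t| / (1 + |s| + |t|) := by
            rw [← div_eq_mul_inv, div_le_div_iff₀ h1 h3]
            nlinarith [mul_nonneg (mul_nonneg hC.le habs) (by linarith : (0:ℝ) ≤ 1 + |t| - |s|)]
      · calc ‖f s - f t‖ = ‖f t - f s‖ := norm_sub_rev _ _
          _ ≤ C * |t - s| * (1 + |s|)⁻¹ := h t s
          _ = C * |s - t| * (1 + |s|)⁻¹ := by rw [abs_sub_comm]
          _ ≤ 2*C * |s - t| / (1 + |s| + |t|) := by
            rw [← div_eq_mul_inv, div_le_div_iff₀ h2 h3]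
            nlinarith [mul_nonneg (mul_nonneg hC.le habs) (by linarith : (0:ℝ) ≤ 1 + |s| - |t|)]
    · rintro ⟨C, hC, h⟩
      refine ⟨C, hC, fun s t => ?_⟩
      have h1 : (0:ℝ) < 1 + |t| := by positivity
      have h3 : (0:ℝ) < 1 + |s| + |t| := by positivity
      calc ‖f s - f t‖ ≤ C * |s - t| / (1 + |s| + |t|) := h s t
        _ ≤ C * |s - t| * (1 + |t|)⁻¹ := by
          rw [← div_eq_mul_inv, div_le_div_iff₀ h3 h1]
          nlinarith [mul_nonneg hC.le (abs_nonneg (s - t)), abs_nonneg s]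
  · constructor
    · rintro ⟨C, hC, h⟩
      refine ⟨2*C + ‖f 0‖, by positivity, fun s t => ?_⟩
      have hb : ∀ u : ℝ, ‖f u‖ ≤ C + ‖f 0‖ := by
        intro u
        have h1 : (0:ℝ) < 1 + |u| := by positivity
        have h2 := h 0 u
        have h3 : ‖f 0 - f u‖ ≤ C := by
          calc ‖f 0 - f u‖ ≤ C * |0 - u| * (1 + |u|)⁻¹ := h2
            _ ≤ C := by
              rw [← div_eq_mul_inv, div_le_iff₀ h1]
              have : |0 - u| = |u| := by rw [abs_sub_comm]; simp
              rw [this]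
              nlinarith [abs_nonneg u]
        calc ‖f u‖ = ‖f 0 - (f 0 - f u)‖ := by ring_nf
          _ ≤ ‖f 0‖ + ‖f 0 - f u‖ := norm_sub_le _ _
          _ ≤ C + ‖f 0‖ := by linarith
      have h2 : (0:ℝ) < 1 + |s| := by positivity
      have key : ((s:ℂ) + I) * f s - ((t:ℂ) + I) * f t
          = ((s:ℂ) + I) * (f s - f t) + ((s:ℂ) - (t:ℂ)) * f t := by ring
      have hst : ‖(s:ℂ) - (t:ℂ)‖ = |s - t| := by
        rw [← Complex.ofReal_sub, Complex.norm_real, Real.norm_eq_abs]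
      calc ‖((s:ℂ) + I) * f s - ((t:ℂ) + I) * f t‖
          = ‖((s:ℂ) + I) * (f s - f t) + ((s:ℂ) - (t:ℂ)) * f t‖ := by rw [key]
        _ ≤ ‖((s:ℂ) + I) * (f s - f t)‖ + ‖((s:ℂ) - (t:ℂ)) * f t‖ := norm_add_le _ _
        _ = ‖(s:ℂ) + I‖ * ‖f s - f t‖ + |s - t| * ‖f t‖ := by rw [norm_mul, norm_mul, hst]
        _ ≤ (1 + |s|) * (C * |s - t| * (1 + |s|)⁻¹) + |s - t| * (C + ‖f 0‖) := by
            have hA : ‖(s:ℂ) + I‖ * ‖f s - f t‖ ≤ (1 + |s|) * (C * |s - t| * (1 + |s|)⁻¹) := by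
              have hf : ‖f s - f t‖ ≤ C * |s - t| * (1 + |s|)⁻¹ := by
                rw [norm_sub_rev, ← abs_sub_comm t s]
                exact h t s
              exact mul_le_mul (norm_addI_le s) hf (norm_nonneg _) (by positivity)
            have hB : |s - t| * ‖f t‖ ≤ |s - t| * (C + ‖f 0‖) :=
              mul_le_mul_of_nonneg_left (hb t) (abs_nonneg _)
            linarith
        _ = C * |s - t| + |s - t| * (C + ‖f 0‖) := by
            field_simp
        _ ≤ (2*C + ‖f 0‖) * |s - t| := by nlinarith [abs_nonneg (s - t)]
    · rintro ⟨L, hL, hg⟩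
      refine ⟨6*L + 4*‖f 0‖ + 1, by positivity, fun s t => ?_⟩
      have h1 : (0:ℝ) < 1 + |t| := by positivity
      have h2 : (0:ℝ) < 1 + |s| := by positivity
      -- bound on ‖f u‖
      have hfb : ∀ u : ℝ, ‖f u‖ ≤ 2*‖f 0‖ + 2*L := by
        intro u
        have hgu : ‖((u:ℂ) + I) * f u‖ ≤ ‖f 0‖ + L * |u| := by
          have := hg u 0
          have h0 : ‖((0:ℝ):ℂ) + I‖ * ‖f 0‖ = ‖f 0‖ := by
            simp [Complex.norm_I]
          calc ‖((u:ℂ) + I) * f u‖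
              = ‖(((u:ℂ) + I) * f u - (((0:ℝ):ℂ) + I) * f 0) + (((0:ℝ):ℂ) + I) * f 0‖ := by
                ring_nf
            _ ≤ ‖((u:ℂ) + I) * f u - (((0:ℝ):ℂ) + I) * f 0‖ + ‖(((0:ℝ):ℂ) + I) * f 0‖ :=
                norm_add_le _ _
            _ ≤ L * |u - 0| + ‖(((0:ℝ):ℂ) + I)‖ * ‖f 0‖ := by
                rw [norm_mul]; exact add_le_add (hg u 0) le_rfl
            _ = ‖f 0‖ + L * |u| := by rw [h0]; simp; ring
        have hnorm : ‖((u:ℂ) + I) * f u‖ = ‖(u:ℂ) + I‖ * ‖f u‖ := norm_mul _ _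
        have hkey : (1 + |u|) * ‖f u‖ ≤ 2 * (‖f 0‖ + L * |u|) := by
          have h3 : 1 + |u| ≤ 2 * ‖(u:ℂ) + I‖ := by
            have := one_le_norm_addI u; have := abs_le_norm_addI u; linarith
          calc (1 + |u|) * ‖f u‖ ≤ 2 * ‖(u:ℂ) + I‖ * ‖f u‖ :=
              mul_le_mul_of_nonneg_right h3 (norm_nonneg _)
            _ = 2 * (‖(u:ℂ) + I‖ * ‖f u‖) := by ring
            _ ≤ 2 * (‖f 0‖ + L * |u|) := by rw [← hnorm]; linarith
        nlinarith [abs_nonneg u, norm_nonneg (f u), norm_nonneg (f 0)]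
      -- main estimate: multiply through by (1 + |t|)
      rw [← div_eq_mul_inv, le_div_iff₀ h1]
      have hident : ((t:ℂ) + I) * (f s - f t)
          = ((t:ℂ) - (s:ℂ)) * f s + (((s:ℂ) + I) * f s - ((t:ℂ) + I) * f t) := by ring
      have hts : ‖(t:ℂ) - (s:ℂ)‖ = |s - t| := by
        rw [← Complex.ofReal_sub, Complex.norm_real, Real.norm_eq_abs, abs_sub_comm]
      have hmain : ‖(t:ℂ) + I‖ * ‖f s - f t‖ ≤ (2*‖f 0‖ + 3*L) * |s - t| := by
        calc ‖(t:ℂ) + I‖ * ‖f s - f t‖ = ‖((t:ℂ) + I) * (f s - f t)‖ := (norm_mul _ _).symm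
          _ = ‖((t:ℂ) - (s:ℂ)) * f s + (((s:ℂ) + I) * f s - ((t:ℂ) + I) * f t)‖ := by
              rw [hident]
          _ ≤ ‖((t:ℂ) - (s:ℂ)) * f s‖ + ‖((s:ℂ) + I) * f s - ((t:ℂ) + I) * f t‖ :=
              norm_add_le _ _
          _ ≤ |s - t| * (2*‖f 0‖ + 2*L) + L * |s - t| := by
              rw [norm_mul, hts]
              exact add_le_add (mul_le_mul_of_nonneg_left (hfb s) (abs_nonneg _)) (hg s t)
          _ = (2*‖f 0‖ + 3*L) * |s - t| := by ring
      have h3 : 1 + |t| ≤ 2 * ‖(t:ℂ) + I‖ := by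
        have := one_le_norm_addI t; have := abs_le_norm_addI t; linarith
      calc ‖f s - f t‖ * (1 + |t|) ≤ ‖f s - f t‖ * (2 * ‖(t:ℂ) + I‖) :=
          mul_le_mul_of_nonneg_left h3 (norm_nonneg _)
        _ = 2 * (‖(t:ℂ) + I‖ * ‖f s - f t‖) := by ring
        _ ≤ 2 * ((2*‖f 0‖ + 3*L) * |s - t|) := by linarith
        _ ≤ (6*L + 4*‖f 0‖ + 1) * |s - t| := by nlinarith [abs_nonneg (s - t)]
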